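/- Let ψ_cat = (Φ + V_{Γ̃_{y₀}} Φ) / ‖Φ + V_{Γ̃_{y₀}} Φ‖ (the denominator is nonzero). Then for every integer T ≥ 3, every choice of T distinct columns x_1, …, x_T ∈ ZMod L_x, every row y₀ ∈ ZMod L_y, and every valid input a : Fin T → {0,1} with ∑_j a_j even, the winning probability satisfies p(ψ_cat, a) = 1; that is, the quantum strategy based on the topological cat state wins the toric code game with certainty. -/

import Mathlib

open Finset

noncomputable section

/-- The Hilbert space of qubits at the elements of `ι`. -/
abbrev QubitSpace (ι : Type*) := (ι → ZMod 2) → ℂ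

/-- Indicator function of a finset, valued in `ZMod 2`. -/
def indicZ2 {ι : Type*} [DecidableEq ι] (S : Finset ι) : ι → ZMod 2 :=
  fun b => if b ∈ S then 1 else 0

/-- The Z-type operator `W_S`. -/
def Wop {ι : Type*} [DecidableEq ι] (S : Finset ι) :
    Module.End ℂ (QubitSpace ι) where
  toFun ψ := fun σ => (-1 : ℂ) ^ (∑ b ∈ S, σ b).val * ψ σ
  map_add' ψ φ := by funext σ; simp [mul_add]
  map_smul' c ψ := by funext σ; simp; ring

/-- The X-type operator `V_S`. -/
def Vop {ι : Type*} [DecidableEq ι] (S : Finset ι) :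
    Module.End ℂ (QubitSpace ι) where
  toFun ψ := fun σ => ψ (σ + indicZ2 S)
  map_add' _ _ := rfl
  map_smul' _ _ := rfl

/-- The inner product `⟨ψ, φ⟩ = ∑_σ conj (ψ σ) · φ σ`. -/
def qInner {ι : Type*} [Fintype ι] [DecidableEq ι] (ψ φ : QubitSpace ι) : ℂ :=
  ∑ σ, (starRingEnd ℂ) (ψ σ) * φ σ

/-- Square root of an involution: `W^{1/2} = (1/2)(1+W) + (i/2)(1−W)`. -/
def sqrtInv {E : Type*} [AddCommGroup E] [Module ℂ E] (W : Module.End ℂ E) :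
    Module.End ℂ E :=
  ((2 : ℂ)⁻¹) • (1 + W) + (Complex.I * (2 : ℂ)⁻¹) • (1 - W)

/-- `W^{a/2}` for `a ∈ {0,1}`: the identity if `a = 0`, `W^{1/2}` if `a = 1`. -/
def halfPow {E : Type*} [AddCommGroup E] [Module ℂ E] (W : Module.End ℂ E)
    (a : ℕ) : Module.End ℂ E :=
  if a = 0 then 1 else sqrtInv W

/-- The post-strategy state `ψ' = (∏_j W_{Γ_j}^{a_j/2}) ψ` (the factors are
commuting diagonal operators, so the order of the product is immaterial). -/
def postState {ι : Type*} [DecidableEq ι] {T : ℕ} (Γ : Fin T → Finset ι)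
    (a : Fin T → ℕ) (ψ : QubitSpace ι) : QubitSpace ι :=
  ((List.ofFn fun j => halfPow (Wop (Γ j)) (a j)).prod) ψ

/-- The X-basis vector `χ_y(σ) = 2^{−|ι|/2} (−1)^{∑_b σ(b)·y(b)}`. -/
def chi {ι : Type*} [Fintype ι] (y : ι → ZMod 2) : QubitSpace ι :=
  fun σ => (((Real.sqrt 2 ^ Fintype.card ι)⁻¹ : ℝ) : ℂ) *
    (-1 : ℂ) ^ (∑ b, (σ b).val * (y b).val)

/-- `r = ((∑_j a_j)/2) mod 2 ∈ ZMod 2`. -/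
def rOf {T : ℕ} (a : Fin T → ℕ) : ZMod 2 := (((∑ j, a j) / 2 : ℕ) : ZMod 2)

/-- The winning probability on input `a`:
`p(ψ, a) = ∑_{y : ∑_{b ∈ Γ̃} y b = r} |⟨χ_y, ψ'⟩|²`. -/
def winProb {ι : Type*} [Fintype ι] [DecidableEq ι] {T : ℕ}
    (Γ : Fin T → Finset ι) (Γt : Finset ι) (a : Fin T → ℕ)
    (ψ : QubitSpace ι) : ℝ :=
  ∑ y ∈ univ.filter (fun y : ι → ZMod 2 => ∑ b ∈ Γt, y b = rOf a),
    ‖qInner (chi y) (postState Γ a ψ)‖ ^ 2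

/-- The quantum winning probability: the average of `p(ψ, a)` over the
`2^{T−1}` valid inputs `a` (those with `∑_j a_j` even). -/
def quantumWinProb {ι : Type*} [Fintype ι] [DecidableEq ι] {T : ℕ}
    (Γ : Fin T → Finset ι) (Γt : Finset ι) (ψ : QubitSpace ι) : ℝ :=
  (∑ a ∈ univ.filter (fun a : Fin T → Fin 2 => Even (∑ j, (a j : ℕ))),
      winProb Γ Γt (fun j => (a j : ℕ)) ψ) / 2 ^ (T - 1)

/-- The computational basis vector `δ_σ`. -/
def deltaVec {ι : Type*} [DecidableEq (ι → ZMod 2)] (σ : ι → ZMod 2) :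
    QubitSpace ι :=
  fun τ => if τ = σ then 1 else 0

/-! ### The square lattice on the torus -/

variable (Lx Ly : ℕ)

/-- Vertices of the `L_x × L_y` square lattice on the torus. -/
abbrev Vertex := ZMod Lx × ZMod Ly

/-- Bonds of the lattice: `((x,y), 0)` is the horizontal bond from `(x,y)` to
`(x+1,y)`, and `((x,y), 1)` the vertical bond from `(x,y)` to `(x,y+1)`. -/
abbrev Bond := (ZMod Lx × ZMod Ly) × Fin 2

variable [NeZero Lx] [NeZero Ly]

/-- The vertical Wilson loop `Γ_x = {((x,y),1) : y}`. -/
def gammaV (x : ZMod Lx) : Finset (Bond Lx Ly) :=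
  univ.filter (fun b => b.1.1 = x ∧ b.2 = 1)

/-- The horizontal Wilson loop `Γ^h_y = {((x,y),0) : x}`. -/
def gammaH (y : ZMod Ly) : Finset (Bond Lx Ly) :=
  univ.filter (fun b => b.1.2 = y ∧ b.2 = 0)

/-- The horizontal dual loop `Γ̃_y = {((x,y),1) : x}`. -/
def dualH (y : ZMod Ly) : Finset (Bond Lx Ly) :=
  univ.filter (fun b => b.1.2 = y ∧ b.2 = 1)

/-- The vertical dual loop `Δ_x = {((x,y),0) : y}`. -/
def dualV (x : ZMod Lx) : Finset (Bond Lx Ly) :=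
  univ.filter (fun b => b.1.1 = x ∧ b.2 = 0)

/-- The plaquette `P(x,y) = {((x,y),0), ((x,y),1), ((x,y+1),0), ((x+1,y),1)}`. -/
def plaqSet (v : Vertex Lx Ly) : Finset (Bond Lx Ly) :=
  {(v, 0), (v, 1), ((v.1, v.2 + 1), 0), ((v.1 + 1, v.2), 1)}

/-- The star `S(x,y) = {((x,y),0), ((x,y),1), ((x−1,y),0), ((x,y−1),1)}`. -/
def starSet (v : Vertex Lx Ly) : Finset (Bond Lx Ly) :=
  {(v, 0), (v, 1), ((v.1 - 1, v.2), 0), ((v.1, v.2 - 1), 1)}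

/-- The plaquette operator `A_{(x,y)} = W_{P(x,y)}`. -/
def Aop (v : Vertex Lx Ly) : Module.End ℂ (QubitSpace (Bond Lx Ly)) :=
  Wop (plaqSet Lx Ly v)

/-- The star operator `B_{(x,y)} = V_{S(x,y)}`. -/
def Bop (v : Vertex Lx Ly) : Module.End ℂ (QubitSpace (Bond Lx Ly)) :=
  Vop (starSet Lx Ly v)

/-- The basis vector at the all-zeros configuration. -/
def delta0 : QubitSpace (Bond Lx Ly) := fun σ => if σ = 0 then 1 else 0

/-- The star projector `(1/2)(1 + B_v)`. -/
def starProj (v : Vertex Lx Ly) : Module.End ℂ (QubitSpace (Bond Lx Ly)) :=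
  ((2 : ℂ)⁻¹) • (1 + Bop Lx Ly v)

lemma vop_commute {ι : Type*} [DecidableEq ι] (S T : Finset ι) :
    Commute (Vop S) (Vop T) := by
  apply LinearMap.ext; intro ψ; funext σ
  simp only [Module.End.mul_apply]
  show ψ (σ + indicZ2 S + indicZ2 T) = ψ (σ + indicZ2 T + indicZ2 S)
  rw [add_right_comm]

lemma starProj_commute (v w : Vertex Lx Ly) :
    Commute (starProj Lx Ly v) (starProj Lx Ly w) := by
  have h : Commute (Bop Lx Ly v) (Bop Lx Ly w) := vop_commute _ _
  have h1 : Commute (1 + Bop Lx Ly v) (1 + Bop Lx Ly w) :=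
    (Commute.one_left _).add_left (((Commute.one_right _).add_right h))
  exact (h1.smul_left _).smul_right _

/-- The (unnormalized) zero-flux ground state
`Φ = (∏_v (1/2)(1 + B_v)) δ₀` (the star projectors commute, so the product
is well-defined). -/
def Phi : QubitSpace (Bond Lx Ly) :=
  (Finset.univ.noncommProd (fun v : Vertex Lx Ly => starProj Lx Ly v)
    (fun v _ w _ _ => starProj_commute Lx Ly v w)) (delta0 Lx Ly)

/-- The norm induced by the inner product. -/
def qNorm {ι : Type*} [Fintype ι] [DecidableEq ι] (ψ : QubitSpace ι) : ℝ :=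
  Real.sqrt (qInner ψ ψ).re

/-- The normalized topological cat state
`ψ_cat = (Φ + V_{Γ̃_{y₀}} Φ) / ‖Φ + V_{Γ̃_{y₀}} Φ‖`. -/
def psiCat (Lx Ly : ℕ) [NeZero Lx] [NeZero Ly] (y₀ : ZMod Ly) :
    QubitSpace (Bond Lx Ly) :=
  ((qNorm (Phi Lx Ly + Vop (dualH Lx Ly y₀) (Phi Lx Ly)) : ℝ) : ℂ)⁻¹ •
    (Phi Lx Ly + Vop (dualH Lx Ly y₀) (Phi Lx Ly))

/-! ### Auxiliary machinery -/

namespace ToricAux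

open Complex

lemma zmod2_cases (s : ZMod 2) : s = 0 ∨ s = 1 := by revert s; decide

/-- The sign character `ZMod 2 → ℂ`. -/
def sgn (s : ZMod 2) : ℂ := (-1 : ℂ) ^ s.val

lemma sgn_zero : sgn 0 = 1 := rfl

lemma val0 : (0 : ZMod 2).val = 0 := rfl
lemma val1 : (1 : ZMod 2).val = 1 := rfl

lemma sgn_one : sgn 1 = -1 := by simp [sgn, val1]

lemma sgn_add (s t : ZMod 2) : sgn (s + t) = sgn s * sgn t := by
  rcases zmod2_cases s with rfl | rfl <;> rcases zmod2_cases t with rfl | rfl <;>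
    simp only [add_zero, zero_add, show (1 + 1 : ZMod 2) = 0 by decide,
      sgn_zero, sgn_one] <;> norm_num

lemma conj_sgn (s : ZMod 2) : (starRingEnd ℂ) (sgn s) = sgn s := by
  rcases zmod2_cases s with rfl | rfl <;> simp [sgn_zero, sgn_one]

lemma sgn_mul_self (s : ZMod 2) : sgn s * sgn s = 1 := by
  rcases zmod2_cases s with rfl | rfl <;> norm_num [sgn_zero, sgn_one]

lemma sgn_sum {β : Type*} (s : Finset β) (f : β → ZMod 2) :
    sgn (∑ b ∈ s, f b) = ∏ b ∈ s, sgn (f b) := by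
  classical
  induction s using Finset.cons_induction with
  | empty => simp [sgn_zero]
  | cons a s ha ih => rw [Finset.sum_cons, Finset.prod_cons, sgn_add, ih]

lemma pow_val_mul (s t : ZMod 2) : (-1 : ℂ) ^ (s.val * t.val) = sgn (s * t) := by
  rcases zmod2_cases s with rfl | rfl <;> rcases zmod2_cases t with rfl | rfl <;>
    simp only [val0, val1, mul_zero, zero_mul, mul_one, one_mul, pow_zero,
      pow_one, sgn_zero, sgn_one]

lemma sum_univ_zmod2 {M : Type*} [AddCommMonoid M] (f : ZMod 2 → M) :
    ∑ t, f t = f 0 + f 1 := by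
  have : (Finset.univ : Finset (ZMod 2)) = {0, 1} := by decide
  rw [this, Finset.sum_insert (by decide), Finset.sum_singleton]

/-- `chi` in terms of `sgn`. -/
lemma chi_eq {ι : Type*} [Fintype ι] (y σ : ι → ZMod 2) :
    chi y σ = (((Real.sqrt 2 ^ Fintype.card ι)⁻¹ : ℝ) : ℂ) *
      ∏ b, sgn (σ b * y b) := by
  rw [chi, ← Finset.prod_pow_eq_pow_sum]
  congr 1
  exact Finset.prod_congr rfl fun b _ => pow_val_mul _ _

lemma conj_chi {ι : Type*} [Fintype ι] (y σ : ι → ZMod 2) :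
    (starRingEnd ℂ) (chi y σ) = chi y σ := by
  rw [chi_eq, map_mul, map_prod, Complex.conj_ofReal]
  congr 1
  exact Finset.prod_congr rfl fun b _ => conj_sgn _

end ToricAux
namespace ToricAux

open Complex

/-- The diagonal coefficient of `halfPow (Wop S) a`. -/
def dcoef {ι : Type*} [DecidableEq ι] (S : Finset ι) (a : ℕ)
    (σ : ι → ZMod 2) : ℂ :=
  if a = 0 then 1 else
    (2 : ℂ)⁻¹ * (1 + sgn (∑ b ∈ S, σ b)) +
      Complex.I * (2 : ℂ)⁻¹ * (1 - sgn (∑ b ∈ S, σ b))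

lemma wop_apply {ι : Type*} [DecidableEq ι] (S : Finset ι) (ψ : QubitSpace ι)
    (σ : ι → ZMod 2) : Wop S ψ σ = sgn (∑ b ∈ S, σ b) * ψ σ := rfl

lemma vop_apply {ι : Type*} [DecidableEq ι] (S : Finset ι) (ψ : QubitSpace ι)
    (σ : ι → ZMod 2) : Vop S ψ σ = ψ (σ + indicZ2 S) := rfl

lemma halfPow_apply {ι : Type*} [DecidableEq ι] (S : Finset ι) (a : ℕ)
    (ψ : QubitSpace ι) (σ : ι → ZMod 2) :
    halfPow (Wop S) a ψ σ = dcoef S a σ * ψ σ := by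
  by_cases ha : a = 0
  · simp [halfPow, dcoef, ha, Module.End.one_apply]
  · simp only [halfPow, dcoef, ha, if_false, sqrtInv, LinearMap.add_apply,
      LinearMap.smul_apply, LinearMap.sub_apply, Module.End.one_apply,
      Pi.add_apply, Pi.sub_apply, Pi.smul_apply, wop_apply, smul_eq_mul]
    ring

lemma listProd_apply {ι : Type*} [DecidableEq ι] (l : List (Finset ι × ℕ))
    (ψ : QubitSpace ι) (σ : ι → ZMod 2) :
    ((l.map fun p => halfPow (Wop p.1) p.2).prod) ψ σ =
      (l.map fun p => dcoef p.1 p.2 σ).prod * ψ σ := by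
  induction l with
  | nil => simp [Module.End.one_apply]
  | cons p l ih =>
    simp only [List.map_cons, List.prod_cons, Module.End.mul_apply,
      halfPow_apply, ih]
    ring

lemma postState_apply {ι : Type*} [DecidableEq ι] {T : ℕ}
    (Γ : Fin T → Finset ι) (a : Fin T → ℕ) (ψ : QubitSpace ι)
    (σ : ι → ZMod 2) :
    postState Γ a ψ σ = (∏ j, dcoef (Γ j) (a j) σ) * ψ σ := by
  have h1 : (List.ofFn fun j => halfPow (Wop (Γ j)) (a j)) =
      (List.ofFn fun j => (Γ j, a j)).map fun p => halfPow (Wop p.1) p.2 := by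
    rw [List.map_ofFn]; rfl
  have h2 : ((List.ofFn fun j => (Γ j, a j)).map
      fun p => dcoef p.1 p.2 σ).prod = ∏ j, dcoef (Γ j) (a j) σ := by
    rw [List.map_ofFn, List.prod_ofFn]; rfl
  rw [postState, h1, listProd_apply, h2]

lemma normSq_dcoef {ι : Type*} [DecidableEq ι] (S : Finset ι) (a : ℕ)
    (σ : ι → ZMod 2) : Complex.normSq (dcoef S a σ) = 1 := by
  by_cases ha : a = 0
  · simp [dcoef, ha]
  · simp only [dcoef, ha, if_false]
    rcases zmod2_cases (∑ b ∈ S, σ b) with h | h <;> rw [h]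
    · have : (2 : ℂ)⁻¹ * (1 + sgn 0) + Complex.I * 2⁻¹ * (1 - sgn 0) = 1 := by
        rw [sgn_zero]; ring
      rw [this]; simp
    · have : (2 : ℂ)⁻¹ * (1 + sgn 1) + Complex.I * 2⁻¹ * (1 - sgn 1) =
          Complex.I := by rw [sgn_one]; ring
      rw [this]; simp

end ToricAux
namespace ToricAux

open Complex

lemma chi_ortho {ι : Type*} [Fintype ι] [DecidableEq ι] (σ τ : ι → ZMod 2) :
    (∑ y : ι → ZMod 2, chi y σ * chi y τ) = if σ = τ then 1 else 0 := by
  classical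
  set c : ℂ := (((Real.sqrt 2 ^ Fintype.card ι)⁻¹ : ℝ) : ℂ) with hcdef
  have hc2 : c * c * 2 ^ Fintype.card ι = 1 := by
    have hr : ((Real.sqrt 2 ^ Fintype.card ι)⁻¹) *
        ((Real.sqrt 2 ^ Fintype.card ι)⁻¹) * 2 ^ Fintype.card ι = 1 := by
      rw [← mul_inv, ← mul_pow, Real.mul_self_sqrt (by norm_num : (0:ℝ) ≤ 2)]
      exact inv_mul_cancel₀ (pow_ne_zero _ two_ne_zero)
    calc c * c * 2 ^ Fintype.card ι
        = ((((Real.sqrt 2 ^ Fintype.card ι)⁻¹) *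
            ((Real.sqrt 2 ^ Fintype.card ι)⁻¹) * 2 ^ Fintype.card ι : ℝ) : ℂ) := by
          rw [hcdef]; push_cast; ring
      _ = 1 := by rw [hr]; norm_num
  have step1 : ∀ y : ι → ZMod 2, chi y σ * chi y τ =
      c * c * ∏ b, sgn ((σ b + τ b) * y b) := by
    intro y
    rw [chi_eq, chi_eq, ← hcdef]
    have : (∏ b, sgn (σ b * y b)) * ∏ b, sgn (τ b * y b) =
        ∏ b, sgn ((σ b + τ b) * y b) := by
      rw [← Finset.prod_mul_distrib]
      exact Finset.prod_congr rfl fun b _ => by rw [← sgn_add, ← add_mul]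
    calc c * (∏ b, sgn (σ b * y b)) * (c * ∏ b, sgn (τ b * y b))
        = c * c * ((∏ b, sgn (σ b * y b)) * ∏ b, sgn (τ b * y b)) := by ring
      _ = _ := by rw [this]
  rw [Finset.sum_congr rfl fun y _ => step1 y, ← Finset.mul_sum]
  have swap : (∑ y : ι → ZMod 2, ∏ b, sgn ((σ b + τ b) * y b)) =
      ∏ b, ∑ t : ZMod 2, sgn ((σ b + τ b) * t) :=
    (Fintype.prod_sum fun b t => sgn ((σ b + τ b) * t)).symm
  rw [swap]
  have factor : ∀ b, (∑ t : ZMod 2, sgn ((σ b + τ b) * t)) =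
      1 + sgn (σ b + τ b) := by
    intro b
    rw [sum_univ_zmod2]
    rw [mul_zero, mul_one, sgn_zero]
  rw [Finset.prod_congr rfl fun b _ => factor b]
  by_cases h : σ = τ
  · subst h
    have : ∀ b, (1 : ℂ) + sgn (σ b + σ b) = 2 := by
      intro b
      have : σ b + σ b = 0 := by rcases zmod2_cases (σ b) with h | h <;> rw [h] <;> decide
      rw [this, sgn_zero]; norm_num
    rw [Finset.prod_congr rfl fun b _ => this b, Finset.prod_const,
      Finset.card_univ, if_pos rfl]
    exact hc2
  · rw [if_neg h]
    obtain ⟨b₀, hb₀⟩ : ∃ b, σ b ≠ τ b := by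
      by_contra hcon
      push_neg at hcon
      exact h (funext hcon)
    have : (1 : ℂ) + sgn (σ b₀ + τ b₀) = 0 := by
      have hsum : σ b₀ + τ b₀ = 1 := by
        rcases zmod2_cases (σ b₀) with h1 | h1 <;> rcases zmod2_cases (τ b₀) with h2 | h2 <;>
          rw [h1, h2] <;> first | (exfalso; rw [h1, h2] at hb₀; exact hb₀ rfl) | decide
      rw [hsum, sgn_one]; ring
    rw [Finset.prod_eq_zero (Finset.mem_univ b₀) this, mul_zero]

lemma parseval {ι : Type*} [Fintype ι] [DecidableEq ι] (φ : QubitSpace ι) :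
    ∑ y : ι → ZMod 2, Complex.normSq (qInner (chi y) φ) =
      ∑ σ, Complex.normSq (φ σ) := by
  classical
  have hinner : ∀ y : ι → ZMod 2, qInner (chi y) φ = ∑ τ, chi y τ * φ τ :=
    fun y => Finset.sum_congr rfl fun τ _ => by rw [conj_chi]
  have hconj : ∀ y : ι → ZMod 2, (starRingEnd ℂ) (qInner (chi y) φ) =
      ∑ σ, chi y σ * (starRingEnd ℂ) (φ σ) := by
    intro y
    rw [hinner, map_sum]
    exact Finset.sum_congr rfl fun σ _ => by rw [map_mul, conj_chi]
  have key : (∑ y : ι → ZMod 2,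
        (starRingEnd ℂ) (qInner (chi y) φ) * qInner (chi y) φ) =
      ∑ σ, (starRingEnd ℂ) (φ σ) * φ σ := by
    have expand : ∀ y : ι → ZMod 2,
        (starRingEnd ℂ) (qInner (chi y) φ) * qInner (chi y) φ =
        ∑ σ, ∑ τ, (chi y σ * chi y τ) * ((starRingEnd ℂ) (φ σ) * φ τ) := by
      intro y
      rw [hconj, hinner, Finset.sum_mul_sum]
      exact Finset.sum_congr rfl fun σ _ => Finset.sum_congr rfl fun τ _ => by ring
    rw [Finset.sum_congr rfl fun y _ => expand y]
    rw [Finset.sum_comm]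
    have inner_eq : ∀ σ : ι → ZMod 2,
        (∑ y : ι → ZMod 2, ∑ τ, (chi y σ * chi y τ) *
          ((starRingEnd ℂ) (φ σ) * φ τ)) = (starRingEnd ℂ) (φ σ) * φ σ := by
      intro σ
      rw [Finset.sum_comm]
      have : ∀ τ : ι → ZMod 2,
          (∑ y : ι → ZMod 2, (chi y σ * chi y τ) *
            ((starRingEnd ℂ) (φ σ) * φ τ)) =
          (if σ = τ then 1 else 0) * ((starRingEnd ℂ) (φ σ) * φ τ) := by
        intro τ
        rw [← Finset.sum_mul, chi_ortho]
      rw [Finset.sum_congr rfl fun τ _ => this τ]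
      simp
    exact Finset.sum_congr rfl fun σ _ => inner_eq σ
  have cast_eq : (∑ y : ι → ZMod 2, (Complex.normSq (qInner (chi y) φ) : ℂ)) =
      ∑ σ, (Complex.normSq (φ σ) : ℂ) := by
    calc (∑ y : ι → ZMod 2, (Complex.normSq (qInner (chi y) φ) : ℂ))
        = ∑ y : ι → ZMod 2,
            (starRingEnd ℂ) (qInner (chi y) φ) * qInner (chi y) φ :=
          Finset.sum_congr rfl fun y _ => Complex.normSq_eq_conj_mul_self
      _ = ∑ σ, (starRingEnd ℂ) (φ σ) * φ σ := key
      _ = ∑ σ, (Complex.normSq (φ σ) : ℂ) :=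
          Finset.sum_congr rfl fun σ _ => Complex.normSq_eq_conj_mul_self.symm
  exact_mod_cast cast_eq

end ToricAux
namespace ToricAux

open Complex

lemma sum_indic {ι : Type*} [DecidableEq ι] (Γ S : Finset ι) :
    ∑ b ∈ Γ, indicZ2 S b = ((Γ ∩ S).card : ZMod 2) := by
  simp only [indicZ2]
  rw [Finset.sum_ite_mem]
  simp

lemma gammaV_inter_dualH (x : ZMod Lx) (y₀ : ZMod Ly) :
    gammaV Lx Ly x ∩ dualH Lx Ly y₀ = {((x, y₀), 1)} := by
  ext ⟨⟨bx, by'⟩, i⟩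
  simp only [gammaV, dualH, Finset.mem_inter, Finset.mem_filter,
    Finset.mem_univ, true_and, Finset.mem_singleton, Prod.mk.injEq]
  constructor
  · rintro ⟨⟨rfl, rfl⟩, h2, -⟩
    exact ⟨⟨rfl, h2⟩, rfl⟩
  · rintro ⟨⟨rfl, rfl⟩, rfl⟩
    exact ⟨⟨rfl, rfl⟩, rfl, rfl⟩

lemma sum_indic_dualH (x : ZMod Lx) (y₀ : ZMod Ly) :
    ∑ b ∈ gammaV Lx Ly x, indicZ2 (dualH Lx Ly y₀) b = 1 := by
  rw [sum_indic, gammaV_inter_dualH, Finset.card_singleton, Nat.cast_one]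

lemma gammaV_inter_starSet_pos (hLy : 2 ≤ Ly) (vx : ZMod Lx) (vy : ZMod Ly) :
    gammaV Lx Ly vx ∩ starSet Lx Ly (vx, vy) =
      {((vx, vy), 1), ((vx, vy - 1), 1)} := by
  ext ⟨⟨bx, by'⟩, i⟩
  simp only [gammaV, starSet, Finset.mem_inter, Finset.mem_filter,
    Finset.mem_univ, true_and, Finset.mem_insert, Finset.mem_singleton,
    Prod.mk.injEq]
  constructor
  · rintro ⟨⟨rfl, rfl⟩, hmem⟩
    rcases hmem with ⟨-, h⟩ | ⟨h1, -⟩ | ⟨-, h⟩ | ⟨h1, -⟩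
    · exact absurd h (by decide)
    · left; exact ⟨⟨h1.1, h1.2⟩, rfl⟩
    · exact absurd h (by decide)
    · right; exact ⟨⟨h1.1, h1.2⟩, rfl⟩
  · rintro (⟨⟨rfl, rfl⟩, rfl⟩ | ⟨⟨rfl, rfl⟩, rfl⟩)
    · exact ⟨⟨rfl, rfl⟩, Or.inr (Or.inl ⟨⟨rfl, rfl⟩, rfl⟩)⟩
    · exact ⟨⟨rfl, rfl⟩, Or.inr (Or.inr (Or.inr ⟨⟨rfl, rfl⟩, rfl⟩))⟩

lemma gammaV_inter_starSet_neg (x : ZMod Lx) (vx : ZMod Lx) (vy : ZMod Ly)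
    (hv : vx ≠ x) : gammaV Lx Ly x ∩ starSet Lx Ly (vx, vy) = ∅ := by
  ext ⟨⟨bx, by'⟩, i⟩
  simp only [gammaV, starSet, Finset.mem_inter, Finset.mem_filter,
    Finset.mem_univ, true_and, Finset.mem_insert, Finset.mem_singleton,
    Prod.mk.injEq, Finset.notMem_empty, iff_false, not_and]
  rintro ⟨rfl, rfl⟩ hmem
  rcases hmem with ⟨h1, h⟩ | ⟨h1, -⟩ | ⟨h1, h⟩ | ⟨h1, -⟩
  · exact absurd h (by decide)
  · exact hv h1.1.symm
  · exact absurd h (by decide)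
  · exact hv h1.1.symm

lemma sum_indic_star (hLy : 2 ≤ Ly) (x : ZMod Lx) (v : Vertex Lx Ly) :
    ∑ b ∈ gammaV Lx Ly x, indicZ2 (starSet Lx Ly v) b = 0 := by
  haveI : Fact (1 < Ly) := ⟨by omega⟩
  obtain ⟨vx, vy⟩ := v
  rw [sum_indic]
  by_cases hv : vx = x
  · subst hv
    rw [gammaV_inter_starSet_pos Lx Ly hLy vx vy]
    have hne : (((vx, vy), 1) : Bond Lx Ly) ≠ ((vx, vy - 1), 1) := by
      intro h
      have h2 : vy = vy - 1 := (Prod.ext_iff.1 (Prod.ext_iff.1 h).1).2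
      have h3 : (1 : ZMod Ly) = 0 := by linear_combination h2
      exact one_ne_zero h3
    rw [Finset.card_insert_of_notMem (by simpa using hne),
      Finset.card_singleton]
    decide
  · rw [gammaV_inter_starSet_neg Lx Ly x vx vy hv, Finset.card_empty,
      Nat.cast_zero]

end ToricAux
namespace ToricAux

open Complex

lemma starProj_apply (v : Vertex Lx Ly) (ψ : QubitSpace (Bond Lx Ly))
    (σ : Bond Lx Ly → ZMod 2) :
    starProj Lx Ly v ψ σ =
      (2 : ℂ)⁻¹ * (ψ σ + ψ (σ + indicZ2 (starSet Lx Ly v))) := by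
  simp only [starProj, Bop, LinearMap.smul_apply, LinearMap.add_apply,
    Module.End.one_apply, Pi.smul_apply, Pi.add_apply, vop_apply, smul_eq_mul]

lemma wop_commute_starProj (hLy : 2 ≤ Ly) (x : ZMod Lx) (v : Vertex Lx Ly) :
    Commute (Wop (gammaV Lx Ly x)) (starProj Lx Ly v) := by
  apply LinearMap.ext
  intro ψ
  funext σ
  simp only [Module.End.mul_apply, starProj_apply, wop_apply]
  have hsum : ∑ b ∈ gammaV Lx Ly x, (σ + indicZ2 (starSet Lx Ly v)) b =
      ∑ b ∈ gammaV Lx Ly x, σ b := by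
    simp only [Pi.add_apply]
    rw [Finset.sum_add_distrib, sum_indic_star Lx Ly hLy x v, add_zero]
  rw [hsum]
  ring

lemma wop_delta0 (x : ZMod Lx) :
    Wop (gammaV Lx Ly x) (delta0 Lx Ly) = delta0 Lx Ly := by
  funext σ
  rw [wop_apply]
  by_cases h : σ = 0
  · subst h
    have : ∑ b ∈ gammaV Lx Ly x, (0 : Bond Lx Ly → ZMod 2) b = 0 := by simp
    rw [this, sgn_zero, one_mul]
  · simp [delta0, h]

lemma wop_phi (hLy : 2 ≤ Ly) (x : ZMod Lx) :
    Wop (gammaV Lx Ly x) (Phi Lx Ly) = Phi Lx Ly := by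
  have hcomm : Commute (Wop (gammaV Lx Ly x))
      (Finset.univ.noncommProd (fun v : Vertex Lx Ly => starProj Lx Ly v)
        (fun v _ w _ _ => starProj_commute Lx Ly v w)) :=
    Finset.noncommProd_commute _ _ _ _
      (fun v _ => wop_commute_starProj Lx Ly hLy x v)
  calc Wop (gammaV Lx Ly x) (Phi Lx Ly)
      = (Wop (gammaV Lx Ly x) *
          Finset.univ.noncommProd (fun v : Vertex Lx Ly => starProj Lx Ly v)
            (fun v _ w _ _ => starProj_commute Lx Ly v w)) (delta0 Lx Ly) := rfl
    _ = (Finset.univ.noncommProd (fun v : Vertex Lx Ly => starProj Lx Ly v)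
            (fun v _ w _ _ => starProj_commute Lx Ly v w) *
          Wop (gammaV Lx Ly x)) (delta0 Lx Ly) := by rw [hcomm.eq]
    _ = Phi Lx Ly := by
        rw [Module.End.mul_apply, wop_delta0]
        rfl

lemma phi_flux (hLy : 2 ≤ Ly) (x : ZMod Lx) (σ : Bond Lx Ly → ZMod 2)
    (hσ : Phi Lx Ly σ ≠ 0) : ∑ b ∈ gammaV Lx Ly x, σ b = 0 := by
  have h := congrFun (wop_phi Lx Ly hLy x) σ
  rw [wop_apply] at h
  rcases zmod2_cases (∑ b ∈ gammaV Lx Ly x, σ b) with hs | hs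
  · exact hs
  · exfalso
    rw [hs, sgn_one] at h
    have : (2 : ℂ) * Phi Lx Ly σ = 0 := by linear_combination -h
    rcases mul_eq_zero.1 this with h2 | h2
    · norm_num at h2
    · exact hσ h2

/-- Positivity of partial products of star projectors applied to `δ₀`. -/
lemma noncommProd_pred (s : Finset (Vertex Lx Ly)) :
    (∀ σ, 0 ≤ ((s.noncommProd (fun v => starProj Lx Ly v)
        (fun v _ w _ _ => starProj_commute Lx Ly v w)) (delta0 Lx Ly) σ).re ∧
      ((s.noncommProd (fun v => starProj Lx Ly v)
        (fun v _ w _ _ => starProj_commute Lx Ly v w)) (delta0 Lx Ly) σ).im = 0)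
    ∧ 0 < ((s.noncommProd (fun v => starProj Lx Ly v)
        (fun v _ w _ _ => starProj_commute Lx Ly v w)) (delta0 Lx Ly) 0).re := by
  classical
  induction s using Finset.induction_on with
  | empty =>
    erw [Finset.noncommProd_empty]
    simp only [Module.End.one_apply]
    constructor
    · intro σ
      by_cases h : σ = 0 <;> simp [delta0, h]
    · simp [delta0]
  | @insert a s ha ih =>
    erw [Finset.noncommProd_insert_of_notMem _ _ _ _ ha]
    set P := s.noncommProd (fun v => starProj Lx Ly v)
      (fun v _ w _ _ => starProj_commute Lx Ly v w) with hP
    obtain ⟨ih1, ih2⟩ := ih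
    have key : ∀ σ, (starProj Lx Ly a (P (delta0 Lx Ly)) σ).re =
        2⁻¹ * ((P (delta0 Lx Ly) σ).re +
          (P (delta0 Lx Ly) (σ + indicZ2 (starSet Lx Ly a))).re) ∧
        (starProj Lx Ly a (P (delta0 Lx Ly)) σ).im =
        2⁻¹ * ((P (delta0 Lx Ly) σ).im +
          (P (delta0 Lx Ly) (σ + indicZ2 (starSet Lx Ly a))).im) := by
      intro σ
      rw [starProj_apply]
      have h2 : ((2 : ℂ)⁻¹) = (((2 : ℝ)⁻¹ : ℝ) : ℂ) := by norm_num
      rw [h2, Complex.re_ofReal_mul, Complex.im_ofReal_mul,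
        Complex.add_re, Complex.add_im]
      exact ⟨rfl, rfl⟩
    constructor
    · intro σ
      have := key σ
      rw [Module.End.mul_apply, this.1, this.2]
      constructor
      · have := (ih1 σ).1
        have := (ih1 (σ + indicZ2 (starSet Lx Ly a))).1
        positivity
      · rw [(ih1 σ).2, (ih1 (σ + indicZ2 (starSet Lx Ly a))).2]
        norm_num
    · rw [Module.End.mul_apply, (key 0).1]
      have h1 := (ih1 (0 + indicZ2 (starSet Lx Ly a))).1
      positivity

lemma phi_nonneg : ∀ σ, 0 ≤ (Phi Lx Ly σ).re ∧ (Phi Lx Ly σ).im = 0 :=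
  (noncommProd_pred Lx Ly Finset.univ).1

lemma phi_zero_pos : 0 < ((Phi Lx Ly) 0).re :=
  (noncommProd_pred Lx Ly Finset.univ).2

end ToricAux
namespace ToricAux

open Complex

lemma qInner_self_re {ι : Type*} [Fintype ι] [DecidableEq ι]
    (φ : QubitSpace ι) : (qInner φ φ).re = ∑ σ, Complex.normSq (φ σ) := by
  have h : qInner φ φ = ((∑ σ, Complex.normSq (φ σ) : ℝ) : ℂ) := by
    rw [qInner]
    push_cast
    exact Finset.sum_congr rfl fun σ _ => normSq_eq_conj_mul_self.symm
  rw [h, Complex.ofReal_re]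

lemma zmod2_add_self (u : ZMod 2) : u + u = 0 := by revert u; decide

lemma sgn_mul_sgn_ne {p r : ZMod 2} (h : p ≠ r) : sgn p * sgn r = -1 := by
  rcases zmod2_cases p with rfl | rfl <;> rcases zmod2_cases r with rfl | rfl <;>
    first
      | exact absurd rfl h
      | simp [sgn_zero, sgn_one]

end ToricAux
open ToricAux in
/-- the normalizing denominator is nonzero, and for every
`T ≥ 3`, all distinct columns `x_1, …, x_T`, every row `y₀` and every valid
input `a` (each `a j ∈ {0,1}` and `∑_j a_j` even), the quantum strategy based
on the topological cat state wins the toric code game with certainty: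
`p(ψ_cat, a) = 1`. -/
theorem psiCat_wins_with_certainty (Lx Ly : ℕ) [NeZero Lx] [NeZero Ly]
    (hLx : 2 ≤ Lx) (hLy : 2 ≤ Ly) (y₀ : ZMod Ly) :
    qNorm (Phi Lx Ly + Vop (dualH Lx Ly y₀) (Phi Lx Ly)) ≠ 0 ∧
      ∀ (T : ℕ), 3 ≤ T → ∀ x : Fin T → ZMod Lx, Function.Injective x →
        ∀ a : Fin T → ℕ, (∀ j, a j ≤ 1) → Even (∑ j, a j) →
          winProb (fun j => gammaV Lx Ly (x j)) (dualH Lx Ly y₀) a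
            (psiCat Lx Ly y₀) = 1 := by
  classical
  set g : Bond Lx Ly → ZMod 2 := indicZ2 (dualH Lx Ly y₀) with hg
  set φc : QubitSpace (Bond Lx Ly) :=
    Phi Lx Ly + Vop (dualH Lx Ly y₀) (Phi Lx Ly) with hφc
  have hφc_eval : ∀ σ, φc σ = Phi Lx Ly σ + Phi Lx Ly (σ + g) := fun σ => rfl
  have hS : (qInner φc φc).re = ∑ σ, Complex.normSq (φc σ) := qInner_self_re _
  have hφ0re : 0 < (φc 0).re := by
    rw [hφc_eval, Complex.add_re]
    have h1 := phi_zero_pos Lx Ly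
    have h2 := (phi_nonneg Lx Ly (0 + g)).1
    linarith
  have hφ0 : φc 0 ≠ 0 := by
    intro h
    rw [h] at hφ0re
    simp at hφ0re
  have hSpos : 0 < ∑ σ, Complex.normSq (φc σ) :=
    Finset.sum_pos' (fun σ _ => Complex.normSq_nonneg _)
      ⟨0, Finset.mem_univ _, Complex.normSq_pos.2 hφ0⟩
  have hqnorm : qNorm φc = Real.sqrt (∑ σ, Complex.normSq (φc σ)) := by
    rw [qNorm, hS]
  have hnpos : 0 < qNorm φc := by rw [hqnorm]; exact Real.sqrt_pos.2 hSpos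
  have hnn : qNorm φc * qNorm φc = ∑ σ, Complex.normSq (φc σ) := by
    rw [hqnorm]; exact Real.mul_self_sqrt hSpos.le
  refine ⟨hnpos.ne', ?_⟩
  intro T hT x hxinj a ha haeven
  obtain ⟨m, hm⟩ := haeven
  set ψc : QubitSpace (Bond Lx Ly) := psiCat Lx Ly y₀ with hψcdef
  set Γ : Fin T → Finset (Bond Lx Ly) := fun j => gammaV Lx Ly (x j) with hΓ
  set ψ' : QubitSpace (Bond Lx Ly) := postState Γ a ψc with hψ'
  have hψc_eval : ∀ σ, ψc σ =
      (((qNorm φc : ℝ)) : ℂ)⁻¹ * (Phi Lx Ly σ + Phi Lx Ly (σ + g)) :=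
    fun σ => rfl
  have hadd_g : ∀ σ : Bond Lx Ly → ZMod 2, σ + g + g = σ := by
    intro σ
    funext b
    have h := zmod2_add_self (g b)
    simp only [Pi.add_apply]
    rw [add_assoc, h, add_zero]
  have hψc_shift : ∀ σ, ψc (σ + g) = ψc σ := by
    intro σ
    rw [hψc_eval, hψc_eval, hadd_g, add_comm (Phi Lx Ly (σ + g))]
  have hsum_shift : ∀ (j : Fin T) σ,
      ∑ b ∈ Γ j, (σ + g) b = (∑ b ∈ Γ j, σ b) + 1 := by
    intro j σ
    simp only [Pi.add_apply]
    rw [Finset.sum_add_distrib, hg, hΓ]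
    rw [sum_indic_dualH]
  have hflux : ∀ σ, ψc σ ≠ 0 →
      (∀ j, ∑ b ∈ Γ j, σ b = 0) ∨ (∀ j, ∑ b ∈ Γ j, σ b = 1) := by
    intro σ hσ
    have hor : Phi Lx Ly σ ≠ 0 ∨ Phi Lx Ly (σ + g) ≠ 0 := by
      by_contra hcon
      push_neg at hcon
      apply hσ
      rw [hψc_eval, hcon.1, hcon.2, add_zero, mul_zero]
    rcases hor with h | h
    · exact Or.inl fun j => phi_flux Lx Ly hLy (x j) σ h
    · refine Or.inr fun j => ?_
      have h0 := phi_flux Lx Ly hLy (x j) (σ + g) h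
      have h1 : ∑ b ∈ Γ j, (σ + g) b = 0 := h0
      rw [hsum_shift j σ] at h1
      rcases zmod2_cases (∑ b ∈ Γ j, σ b) with hs | hs
      · rw [hs] at h1
        exact absurd h1 (by decide)
      · exact hs
  have hprodw : ∀ σ,
      (∏ j, sgn (∑ b ∈ Γ j, σ b) ^ a j) * ψc σ = ψc σ := by
    intro σ
    by_cases hσ : ψc σ = 0
    · rw [hσ, mul_zero]
    · rcases hflux σ hσ with h | h
      · have h1 : ∀ j : Fin T, sgn (∑ b ∈ Γ j, σ b) ^ a j = 1 := by
          intro j; rw [h j, sgn_zero, one_pow]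
        rw [Finset.prod_congr rfl fun j _ => h1 j, Finset.prod_const_one,
          one_mul]
      · have h1 : (∏ j, sgn (∑ b ∈ Γ j, σ b) ^ a j) =
            (-1 : ℂ) ^ (∑ j, a j) := by
          rw [← Finset.prod_pow_eq_pow_sum]
          exact Finset.prod_congr rfl fun j _ => by rw [h j, sgn_one]
        rw [h1, hm, pow_add, ← mul_pow]
        norm_num
  have hdshift : ∀ (j : Fin T) σ, dcoef (Γ j) (a j) (σ + g) =
      (Complex.I * sgn (∑ b ∈ Γ j, σ b)) ^ a j * dcoef (Γ j) (a j) σ := by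
    intro j σ
    rcases Nat.le_one_iff_eq_zero_or_eq_one.1 (ha j) with h0 | h1
    · rw [h0]
      simp [dcoef]
    · rw [h1]
      simp only [dcoef, one_ne_zero, if_false, pow_one]
      rw [hsum_shift j σ, sgn_add, sgn_one]
      rcases zmod2_cases (∑ b ∈ Γ j, σ b) with hs | hs
      · rw [hs, sgn_zero]; ring1
      · rw [hs, sgn_one]; linear_combination Complex.I_mul_I
  have hpost : ∀ σ, ψ' σ = (∏ j, dcoef (Γ j) (a j) σ) * ψc σ :=
    fun σ => postState_apply Γ a ψc σ
  have hshift : ∀ σ, ψ' (σ + g) = Complex.I ^ (∑ j, a j) * ψ' σ := by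
    intro σ
    rw [hpost, hpost, hψc_shift,
      Finset.prod_congr rfl fun j _ => hdshift j σ, Finset.prod_mul_distrib]
    have h1 : (∏ j, (Complex.I * sgn (∑ b ∈ Γ j, σ b)) ^ a j) =
        Complex.I ^ (∑ j, a j) * ∏ j, sgn (∑ b ∈ Γ j, σ b) ^ a j := by
      rw [← Finset.prod_pow_eq_pow_sum, ← Finset.prod_mul_distrib]
      exact Finset.prod_congr rfl fun j _ => (mul_pow _ _ _)
    rw [h1]
    linear_combination
      (Complex.I ^ (∑ j, a j) * ∏ j, dcoef (Γ j) (a j) σ) * hprodw σ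
  have hIk : Complex.I ^ (∑ j, a j) = sgn (rOf a) := by
    have h2 : (∑ j, a j) / 2 = m := by omega
    simp only [rOf]
    rw [h2, hm, ← two_mul, pow_mul, Complex.I_sq]
    simp only [sgn]
    rw [ZMod.val_natCast, ← neg_one_pow_eq_pow_mod_two]
  have hvanish : ∀ y : Bond Lx Ly → ZMod 2,
      (∑ b ∈ dualH Lx Ly y₀, y b) ≠ rOf a → qInner (chi y) ψ' = 0 := by
    intro y hy
    have hchi : ∀ σ, chi y (σ + g) =
        sgn (∑ b ∈ dualH Lx Ly y₀, y b) * chi y σ := by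
      intro σ
      rw [chi_eq, chi_eq]
      have h1 : ∀ b, sgn ((σ + g) b * y b) =
          sgn (σ b * y b) * sgn (g b * y b) := by
        intro b
        rw [Pi.add_apply, add_mul, sgn_add]
      rw [Finset.prod_congr rfl fun b _ => h1 b, Finset.prod_mul_distrib]
      have h2 : (∏ b, sgn (g b * y b)) =
          sgn (∑ b ∈ dualH Lx Ly y₀, y b) := by
        rw [← sgn_sum]
        congr 1
        rw [hg]
        simp only [indicZ2, ite_mul, one_mul, zero_mul]
        rw [Finset.sum_ite_mem, Finset.univ_inter]
      rw [h2]
      ring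
    have hre' : (∑ σ, (starRingEnd ℂ) (chi y (σ + g)) * ψ' (σ + g)) =
        ∑ σ, (starRingEnd ℂ) (chi y σ) * ψ' σ :=
      Fintype.sum_equiv (Equiv.addRight g) _ _ (fun σ => rfl)
    have hterm : ∀ σ, (starRingEnd ℂ) (chi y (σ + g)) * ψ' (σ + g) =
        (sgn (∑ b ∈ dualH Lx Ly y₀, y b) * sgn (rOf a)) *
          ((starRingEnd ℂ) (chi y σ) * ψ' σ) := by
      intro σ
      rw [hchi, hshift, hIk, map_mul, conj_sgn]
      ring
    have key : (∑ σ, (starRingEnd ℂ) (chi y σ) * ψ' σ) =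
        (sgn (∑ b ∈ dualH Lx Ly y₀, y b) * sgn (rOf a)) *
          ∑ σ, (starRingEnd ℂ) (chi y σ) * ψ' σ := by
      conv_lhs => rw [← hre']
      rw [Finset.sum_congr rfl fun σ _ => hterm σ, ← Finset.mul_sum]
    rw [sgn_mul_sgn_ne hy] at key
    have h2 : (2 : ℂ) * (∑ σ, (starRingEnd ℂ) (chi y σ) * ψ' σ) = 0 := by
      linear_combination key
    have h3 : (∑ σ, (starRingEnd ℂ) (chi y σ) * ψ' σ) = 0 := by
      rcases mul_eq_zero.1 h2 with h | h
      · norm_num at h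
      · exact h
    exact h3
  have hnormD : ∀ σ, Complex.normSq (∏ j, dcoef (Γ j) (a j) σ) = 1 := by
    intro σ
    rw [map_prod, Finset.prod_congr rfl fun j _ => normSq_dcoef (Γ j) (a j) σ,
      Finset.prod_const_one]
  have hnormψc : ∀ σ, Complex.normSq (ψc σ) =
      (qNorm φc * qNorm φc)⁻¹ * Complex.normSq (φc σ) := by
    intro σ
    have h0 : ψc σ = (((qNorm φc : ℝ)) : ℂ)⁻¹ * φc σ := rfl
    rw [h0, map_mul, map_inv₀, Complex.normSq_ofReal]
  have hsum1 : ∑ σ, Complex.normSq (ψ' σ) = 1 := by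
    have h0 : ∀ σ, Complex.normSq (ψ' σ) =
        (qNorm φc * qNorm φc)⁻¹ * Complex.normSq (φc σ) := by
      intro σ
      rw [hpost, map_mul, hnormD, one_mul, hnormψc]
    rw [Finset.sum_congr rfl fun σ _ => h0 σ, ← Finset.mul_sum, ← hnn,
      inv_mul_cancel₀ (by positivity)]
  unfold winProb
  rw [← hψ']
  have hsplit := Finset.sum_filter_add_sum_filter_not Finset.univ
    (fun y : Bond Lx Ly → ZMod 2 => ∑ b ∈ dualH Lx Ly y₀, y b = rOf a)
    (fun y => ‖qInner (chi y) ψ'‖ ^ 2)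
  have hzero : ∑ y ∈ Finset.univ.filter
      (fun y : Bond Lx Ly → ZMod 2 =>
        ¬ (∑ b ∈ dualH Lx Ly y₀, y b = rOf a)),
      ‖qInner (chi y) ψ'‖ ^ 2 = 0 := by
    apply Finset.sum_eq_zero
    intro y hy
    rw [Finset.mem_filter] at hy
    rw [hvanish y hy.2]
    simp
  have htotal : ∑ y : Bond Lx Ly → ZMod 2,
      ‖qInner (chi y) ψ'‖ ^ 2 = 1 := by
    calc ∑ y : Bond Lx Ly → ZMod 2, ‖qInner (chi y) ψ'‖ ^ 2
        = ∑ y : Bond Lx Ly → ZMod 2, Complex.normSq (qInner (chi y) ψ') :=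
          Finset.sum_congr rfl fun y _ => Complex.sq_norm _
      _ = ∑ σ, Complex.normSq (ψ' σ) := parseval ψ'
      _ = 1 := hsum1
  linarith [hsplit, hzero, htotal]
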